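/- Let K be a commutative algebra over a field F graded by an abelian group, such that K is a graded field (every nonzero homogeneous element is invertible), the identity homogeneous component equals F, and K is finite-dimensional over F. If K is separable as an F-algebra, then the dimension of K over F is not divisible by the characteristic of F. -/

import Mathlib

/-- A graded field `K` over `F` (identity component `F`, every nonzero
homogeneous element invertible), finite-dimensional over `F`: if `K` is separable
as an `F`-algebra, then `dim_F K` is not divisible by `char F`. -/
theorem graded_field_dim_not_dvd_char
    {F : Type*} [Field F] {G : Type*} [AddCommGroup G] [DecidableEq G]
    {K : Type*} [CommRing K] [Nontrivial K] [Algebra F K]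
    (A : G → Submodule F K)
    (hinternal : DirectSum.IsInternal A)
    (hgmul : ∀ g h : G, ∀ x ∈ A g, ∀ y ∈ A h, x * y ∈ A (g + h))
    (hone : A 0 = Submodule.span F {(1 : K)})
    (hdiv : ∀ g : G, ∀ x ∈ A g, x ≠ 0 → IsUnit x)
    [FiniteDimensional F K]
    (hsep : Algebra.IsSeparable F K) :
    ¬ (ringChar F ∣ Module.finrank F K) := by
  classical
  intro hdvd
  set p := ringChar F with hpdef
  haveI hCF : CharP F p := ringChar.charP F
  have hfin0 : Module.finrank F K ≠ 0 := Module.finrank_pos.ne'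
  rcases CharP.char_is_prime_or_zero F p with hprime | h0
  swap
  · rw [h0] at hdvd; exact hfin0 (zero_dvd_iff.mp hdvd)
  haveI hFact : Fact p.Prime := ⟨hprime⟩
  haveI hCK : CharP K p :=
    charP_of_injective_algebraMap (algebraMap F K).injective p
  -- graded ring structure
  haveI hGM : SetLike.GradedMonoid A :=
    { one_mem := by rw [hone]; exact Submodule.mem_span_singleton_self 1
      mul_mem := fun {i j gi gj} hi hj => hgmul i j gi hi gj hj }
  haveI hGR : GradedRing A := { hGM with toDecomposition := hinternal.chooseDecomposition }
  -- homogeneous inverses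
  have hinv : ∀ (g : G) (x : K), x ∈ A g → x ≠ 0 → ∃ z ∈ A (-g), x * z = 1 := by
    intro g x hx hx0
    obtain ⟨u, hu⟩ := hdiv g x hx hx0
    refine ⟨(DirectSum.decompose A ((↑u⁻¹ : Kˣ) : K) (-g) : K), Submodule.coe_mem _, ?_⟩
    have hxu : x * ((↑u⁻¹ : Kˣ) : K) = 1 := by rw [← hu]; exact u.mul_inv
    have h1 := DirectSum.coe_decompose_mul_add_of_left_mem (𝒜 := A)
      (b := ((↑u⁻¹ : Kˣ) : K)) (j := -g) hx
    rw [hxu, add_neg_cancel] at h1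
    have h2 : ((DirectSum.decompose A (1 : K)) 0 : K) = 1 :=
      DirectSum.decompose_of_mem_same A (SetLike.one_mem_graded A)
    rw [h2] at h1
    exact h1.symm
  -- each nonzero component is one-dimensional
  have hspan : ∀ (g : G) (x : K), x ∈ A g → x ≠ 0 → A g = Submodule.span F {x} := by
    intro g x hx hx0
    obtain ⟨z, hz, hxz⟩ := hinv g x hx hx0
    apply le_antisymm
    · intro y hy
      have hzy : z * y ∈ A 0 := by
        have := hgmul (-g) g z hz y hy
        rwa [neg_add_cancel] at this
      rw [hone] at hzy
      obtain ⟨c, hc⟩ := Submodule.mem_span_singleton.mp hzy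
      have : y = c • x := by
        calc y = (x * z) * y := by rw [hxz, one_mul]
          _ = x * (z * y) := by ring
          _ = x * (c • (1 : K)) := by rw [hc]
          _ = c • x := by rw [mul_smul_comm, mul_one]
      rw [this]
      exact Submodule.smul_mem _ c (Submodule.mem_span_singleton_self x)
    · rw [Submodule.span_le, Set.singleton_subset_iff]; exact hx
  have hrank1 : ∀ i : {g // A g ≠ ⊥}, Module.finrank F (A i.1) = 1 := by
    rintro ⟨g, hg⟩
    obtain ⟨x, hx, hx0⟩ := Submodule.exists_mem_ne_zero_of_ne_bot hg
    rw [hspan g x hx hx0]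
    exact finrank_span_singleton hx0
  -- finrank = number of nonzero components
  haveI fS : Fintype {g // A g ≠ ⊥} :=
    (hinternal.submodule_iSupIndep).fintypeNeBotOfFiniteDimensional
  have hcard : Module.finrank F K = Fintype.card {g // A g ≠ ⊥} := by
    have h2 : DirectSum.IsInternal (fun i : {g // A g ≠ ⊥} => A i.1) :=
      DirectSum.isInternal_ne_bot_iff.mpr hinternal
    let b := h2.collectedBasis (fun i => Module.finBasis F (A i.1))
    rw [Module.finrank_eq_card_basis b, Fintype.card_sigma]
    simp [hrank1]
  -- the support is an additive subgroup
  let H : AddSubgroup G :=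
    { carrier := {g | A g ≠ ⊥}
      zero_mem' := by
        intro h
        have h1 : (1 : K) ∈ A 0 := SetLike.one_mem_graded A
        rw [h, Submodule.mem_bot] at h1
        exact one_ne_zero h1
      add_mem' := by
        intro a b ha hb
        obtain ⟨x, hx, hx0⟩ := Submodule.exists_mem_ne_zero_of_ne_bot ha
        obtain ⟨y, hy, hy0⟩ := Submodule.exists_mem_ne_zero_of_ne_bot hb
        have hxy : x * y ∈ A (a + b) := hgmul a b x hx y hy
        have hxy0 : x * y ≠ 0 := by
          intro h
          obtain ⟨z, hz, hxz⟩ := hinv a x hx hx0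
          have : y = 0 := by
            calc y = (z * x) * y := by rw [mul_comm z x, hxz, one_mul]
              _ = z * (x * y) := by ring
              _ = 0 := by rw [h, mul_zero]
          exact hy0 this
        exact fun h => hxy0 (by rw [h, Submodule.mem_bot] at hxy; exact hxy)
      neg_mem' := by
        intro a ha
        obtain ⟨x, hx, hx0⟩ := Submodule.exists_mem_ne_zero_of_ne_bot ha
        obtain ⟨z, hz, hxz⟩ := hinv a x hx hx0
        have hz0 : z ≠ 0 := by
          intro h; rw [h, mul_zero] at hxz; exact one_ne_zero hxz.symm
        exact fun h => hz0 (by rw [h, Submodule.mem_bot] at hz; exact hz) }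
  haveI : Fintype H := Fintype.ofEquiv {g // A g ≠ ⊥}
    (Equiv.subtypeEquivRight (fun g => Iff.rfl))
  have hcardH : Fintype.card H = Fintype.card {g // A g ≠ ⊥} :=
    Fintype.card_congr (Equiv.subtypeEquivRight (fun g => Iff.rfl)).symm
  -- Cauchy: an element of order p in the support
  obtain ⟨gH, hgH⟩ := exists_prime_addOrderOf_dvd_card (G := H) p
    (by rw [hcardH, ← hcard]; exact hdvd)
  have hg_ne : (gH : G) ≠ 0 := by
    intro h
    have : gH = 0 := by ext; exact h
    rw [this, addOrderOf_zero] at hgH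
    exact hprime.ne_one hgH.symm
  have hpg : p • (gH : G) = 0 := by
    have := addOrderOf_nsmul_eq_zero gH
    rw [hgH] at this
    have := congrArg (Subtype.val : H → G) this
    simpa using this
  -- a homogeneous element of degree gH with x ^ p scalar
  obtain ⟨x, hx, hx0⟩ := Submodule.exists_mem_ne_zero_of_ne_bot gH.2
  have hxp : x ^ p ∈ A 0 := by
    have := SetLike.pow_mem_graded p hx
    rwa [hpg] at this
  obtain ⟨c, hc⟩ : ∃ c : F, x ^ p = algebraMap F K c := by
    rw [hone] at hxp
    obtain ⟨c, hc⟩ := Submodule.mem_span_singleton.mp hxp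
    exact ⟨c, by rw [Algebra.algebraMap_eq_smul_one, hc]⟩
  -- x is not in the degree-0 component
  have hx_not0 : x ∉ A (0 : G) := by
    intro h
    have hdisj : Disjoint (A (gH : G)) (A (0 : G)) :=
      hinternal.submodule_iSupIndep.pairwiseDisjoint hg_ne
    exact hx0 (Submodule.disjoint_def.mp hdisj x hx h)
  have hint : IsIntegral F x := IsIntegral.of_finite F x
  open Polynomial in
  by_cases hb : ∃ b : F, b ^ p = c
  · -- c is a p-th power: x - algebraMap b is nilpotent, hence zero by separability
    obtain ⟨b, hbc⟩ := hb
    set w : K := x - algebraMap F K b with hwdef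
    have hwp : w ^ p = 0 := by
      rw [hwdef, sub_pow_char, hc, ← map_pow, hbc, sub_self]
    have hintw : IsIntegral F w := IsIntegral.of_finite F w
    have hdvd2 : minpoly F w ∣ X ^ p := by
      apply minpoly.dvd
      rw [map_pow, aeval_X, hwp]
    obtain ⟨i, hip, hassoc⟩ := (dvd_prime_pow prime_X p).mp hdvd2
    have heq : minpoly F w = X ^ i :=
      Polynomial.eq_of_monic_of_associated (minpoly.monic hintw) (monic_X_pow i) hassoc
    have hi_pos : 0 < i := by
      rcases Nat.eq_zero_or_pos i with h | h
      · exfalso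
        have := minpoly.natDegree_pos hintw
        rw [heq, h, pow_zero, natDegree_one] at this
        exact lt_irrefl 0 this
      · exact h
    have hi_one : i = 1 := by
      by_contra hne
      have hi2 : 2 ≤ i := by omega
      have hsepw : (minpoly F w).Separable := Algebra.IsSeparable.isSeparable F w
      rw [heq] at hsepw
      have hsq := hsepw.squarefree
      have : (X : Polynomial F) * X ∣ X ^ i := by
        rw [← pow_two]
        exact pow_dvd_pow X hi2
      exact Polynomial.not_isUnit_X (hsq X this)
    have hw0 : w = 0 := by
      have := minpoly.aeval F w
      rw [heq, hi_one, pow_one, aeval_X] at this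
      exact this
    apply hx_not0
    have hxb : x = algebraMap F K b := by
      rw [← sub_eq_zero]; exact hw0
    rw [hxb, hone, Algebra.algebraMap_eq_smul_one]
    exact Submodule.smul_mem _ b (Submodule.mem_span_singleton_self 1)
  · -- c is not a p-th power: minpoly x = X ^ p - C c, which is inseparable
    push_neg at hb
    have hirr : Irreducible (X ^ p - C c) :=
      X_pow_sub_C_irreducible_of_prime hprime hb
    have heq : minpoly F x = X ^ p - C c := by
      refine (minpoly.eq_of_irreducible_of_monic hirr ?_ ?_).symm
      · rw [map_sub, map_pow, aeval_X, aeval_C, hc, sub_self]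
      · exact monic_X_pow_sub_C c hprime.ne_zero
    have hsepx : (minpoly F x).Separable := Algebra.IsSeparable.isSeparable F x
    rw [heq] at hsepx
    have hder : derivative (X ^ p - C c : F[X]) = 0 := by
      rw [derivative_sub, derivative_C, derivative_X_pow, sub_zero,
        CharP.cast_eq_zero F p, map_zero, zero_mul]
    rw [Polynomial.Separable, hder] at hsepx
    exact hirr.not_isUnit (isCoprime_zero_right.mp hsepx)
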